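/- If S = [[A,B],[C,D]] is a real 2n×2n symplectic matrix and Z is a complex symmetric n×n matrix with positive definite imaginary part, then A + BZ is invertible. -/

import Mathlib

open Matrix Complex

private lemma aux_posdef (n : ℕ) (Y : Matrix (Fin n) (Fin n) ℝ) (hY : Y.PosDef)
    (v : Fin n → ℂ) (hv : v ≠ 0) : star v ⬝ᵥ (Y.map Complex.ofReal) *ᵥ v ≠ 0 := by
  set a : Fin n → ℝ := fun i => (v i).re with ha
  set b : Fin n → ℝ := fun i => (v i).im with hb
  have hre : (star v ⬝ᵥ (Y.map Complex.ofReal) *ᵥ v).re = a ⬝ᵥ Y *ᵥ a + b ⬝ᵥ Y *ᵥ b := by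
    simp only [dotProduct, mulVec, Matrix.map_apply, Pi.star_apply, Finset.mul_sum,
      Complex.re_sum, RCLike.star_def]
    rw [← Finset.sum_add_distrib]
    refine Finset.sum_congr rfl fun i _ => ?_
    rw [← Finset.sum_add_distrib]
    refine Finset.sum_congr rfl fun j _ => ?_
    simp [Complex.mul_re, Complex.mul_im, ha, hb]
  intro h
  have hab : a ≠ 0 ∨ b ≠ 0 := by
    by_contra hc
    push_neg at hc
    apply hv
    funext i
    have h1 : a i = 0 := by rw [hc.1]; rfl
    have h2 : b i = 0 := by rw [hc.2]; rfl
    exact Complex.ext h1 h2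
  have hpos : 0 < a ⬝ᵥ Y *ᵥ a + b ⬝ᵥ Y *ᵥ b := by
    rcases hab with h' | h'
    · have := hY.dotProduct_mulVec_pos h'
      have h2 := hY.posSemidef.dotProduct_mulVec_nonneg b
      positivity
    · have := hY.dotProduct_mulVec_pos h'
      have h2 := hY.posSemidef.dotProduct_mulVec_nonneg a
      positivity
  rw [h] at hre
  simp only [Complex.zero_re] at hre
  linarith

theorem stmt_1 (n : ℕ) (A B C D : Matrix (Fin n) (Fin n) ℝ)
    (hS : (Matrix.fromBlocks A B C D)ᵀ * (Matrix.fromBlocks 0 1 (-1) 0) *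
      (Matrix.fromBlocks A B C D) = (Matrix.fromBlocks 0 1 (-1) 0 :
        Matrix (Fin n ⊕ Fin n) (Fin n ⊕ Fin n) ℝ))
    (Z : Matrix (Fin n) (Fin n) ℂ) (hZsym : Zᵀ = Z)
    (hZpos : (Z.map Complex.im).PosDef) :
    IsUnit (A.map Complex.ofReal + B.map Complex.ofReal * Z) := by
  set A' := A.map (Complex.ofReal) with hA'
  set B' := B.map (Complex.ofReal) with hB'
  set C' := C.map (Complex.ofReal) with hC'
  set D' := D.map (Complex.ofReal) with hD'
  set S' : Matrix (Fin n ⊕ Fin n) (Fin n ⊕ Fin n) ℂ := Matrix.fromBlocks A' B' C' D' with hS'def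
  set J' : Matrix (Fin n ⊕ Fin n) (Fin n ⊕ Fin n) ℂ := Matrix.fromBlocks 0 1 (-1) 0 with hJ'def
  have mapmul : ∀ (M N : Matrix (Fin n ⊕ Fin n) (Fin n ⊕ Fin n) ℝ),
      (M * N).map (Complex.ofReal) = M.map Complex.ofReal * N.map Complex.ofReal :=
    fun M N => Matrix.map_mul (f := Complex.ofRealHom)
  have hSmap : (Matrix.fromBlocks A B C D).map Complex.ofReal = S' := by
    rw [hS'def, Matrix.fromBlocks_map]
  have hJmap : (Matrix.fromBlocks (0 : Matrix (Fin n) (Fin n) ℝ) 1 (-1) 0).map Complex.ofReal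
      = J' := by
    ext i j
    rcases i with i | i <;> rcases j with j | j <;>
      simp [hJ'def, Matrix.map_apply, Matrix.one_apply, apply_ite Complex.ofReal]
  have hS' : S'ᵀ * J' * S' = J' := by
    have h2 := congrArg (fun M => M.map (Complex.ofReal)) hS
    simp only [mapmul] at h2
    rw [← hSmap, ← hJmap, ← Matrix.transpose_map]
    exact h2
  rw [Matrix.isUnit_iff_isUnit_det, isUnit_iff_ne_zero]
  intro hdet
  obtain ⟨v, hv, hv0⟩ := (Matrix.exists_mulVec_eq_zero_iff).mpr hdet
  set x : Fin n ⊕ Fin n → ℂ := Sum.elim v (Z *ᵥ v) with hx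
  have hstarx : star x = Sum.elim (star v) (star (Z *ᵥ v)) := by
    funext i; cases i <;> rfl
  set q : Fin n → ℂ := C' *ᵥ v + D' *ᵥ (Z *ᵥ v) with hq
  have hSx : S' *ᵥ x = Sum.elim (0 : Fin n → ℂ) q := by
    have h0 : A' *ᵥ v + B' *ᵥ (Z *ᵥ v) = 0 := by
      rw [Matrix.mulVec_mulVec, ← Matrix.add_mulVec]
      exact hv0
    rw [hS'def, hx, Matrix.fromBlocks_mulVec]
    simp only [Sum.elim_comp_inl, Sum.elim_comp_inr]
    rw [h0]
  have hconj : S'ᴴ = S'ᵀ := by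
    ext i j
    rcases i with i | i <;> rcases j with j | j <;>
      simp [hS'def, Matrix.conjTranspose_apply, Matrix.transpose_apply, hA', hB', hC', hD',
        Matrix.map_apply]
  have hstarSx : S' *ᵥ (star x) = star (S' *ᵥ x) := by
    rw [Matrix.star_mulVec, hconj, Matrix.vecMul_transpose]
  have main : star x ⬝ᵥ (S'ᵀ * J' * S') *ᵥ x = star x ⬝ᵥ J' *ᵥ x := by rw [hS']
  have hL : star x ⬝ᵥ (S'ᵀ * J' * S') *ᵥ x = 0 := by
    rw [← Matrix.mulVec_mulVec, ← Matrix.mulVec_mulVec, dotProduct_mulVec,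
      Matrix.vecMul_transpose, hstarSx, hSx]
    have : J' *ᵥ Sum.elim (0 : Fin n → ℂ) q = Sum.elim q (0 : Fin n → ℂ) := by
      rw [hJ'def, Matrix.fromBlocks_mulVec]
      simp
    rw [this]
    have : star (Sum.elim (0 : Fin n → ℂ) q) = Sum.elim (0 : Fin n → ℂ) (star q) := by
      funext i; cases i <;> simp
    rw [this, sumElim_dotProduct_sumElim]
    simp
  have hR : star x ⬝ᵥ J' *ᵥ x = star v ⬝ᵥ Z *ᵥ v - star v ⬝ᵥ Zᴴ *ᵥ v := by
    have : J' *ᵥ x = Sum.elim (Z *ᵥ v) (-v) := by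
      rw [hJ'def, hx, Matrix.fromBlocks_mulVec]
      simp [Matrix.neg_mulVec]
    rw [this, hstarx, sumElim_dotProduct_sumElim]
    rw [dotProduct_neg, Matrix.star_mulVec, ← dotProduct_mulVec]
    ring
  have key : star v ⬝ᵥ (Z - Zᴴ) *ᵥ v = 0 := by
    rw [Matrix.sub_mulVec, dotProduct_sub, ← hR, ← main, hL]
  have hZZ : Z - Zᴴ = (2 * Complex.I) • ((Z.map Complex.im).map Complex.ofReal) := by
    ext i j
    have hz : Z j i = Z i j := by
      have := congrFun (congrFun hZsym i) j
      rw [Matrix.transpose_apply] at this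
      exact this
    simp only [Matrix.sub_apply, Matrix.conjTranspose_apply, Matrix.smul_apply,
      Matrix.map_apply, smul_eq_mul, hz, RCLike.star_def]
    rw [Complex.sub_conj]
    push_cast
    ring
  rw [hZZ, Matrix.smul_mulVec, dotProduct_smul, smul_eq_mul, mul_eq_zero] at key
  rcases key with h | h
  · exact two_ne_zero (by simpa [Complex.I_ne_zero, Complex.ext_iff] using h)
  · exact aux_posdef n (Z.map Complex.im) hZpos v hv h
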